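/- arXiv:2209.04516 — 6 statements merged into one kernel-verified Lean document; each statement's English description precedes it below -/
import Mathlib

section
/- Let G ∈ ℝ^{d×d} be a symmetric matrix with all entries non-negative (in fact bounded below by m/d² > 0). Define 𝖢 on the cone 𝒞 = {Gx : x ∈ ℝ_{≥0}^d} by 𝖢(Gx) = (1/2) Gx·x. Then 𝖢 is non-decreasing: if y, y' ∈ 𝒞 with y' − y ∈ ℝ_{≥0}^d, then 𝖢(y) ≤ 𝖢(y'). -/
/-- The non-linearity 𝖢(Gx) = (1/2) Gx·x is non-decreasing on the cone
𝒞 = {Gx : x ∈ ℝ_{≥0}^d} with respect to the componentwise order, where G is a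
symmetric matrix with entries bounded below by m/d² > 0. -/
theorem nonlinearity_nondecreasing (d : ℕ) (m : ℝ) (hm : 0 < m)
    (G : Matrix (Fin d) (Fin d) ℝ) (hsym : G.IsSymm)
    (hG : ∀ k k', m / (d : ℝ) ^ 2 ≤ G k k')
    (x x' : Fin d → ℝ) (hx : ∀ i, 0 ≤ x i) (hx' : ∀ i, 0 ≤ x' i)
    (hle : ∀ i, G.mulVec x i ≤ G.mulVec x' i) :
    (1 / 2) * ∑ i, G.mulVec x i * x i ≤ (1 / 2) * ∑ i, G.mulVec x' i * x' i := by
  have key : ∑ i, G.mulVec x' i * x i = ∑ i, G.mulVec x i * x' i := by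
    simp only [Matrix.mulVec, dotProduct, Finset.sum_mul]
    rw [Finset.sum_comm]
    refine Finset.sum_congr rfl fun j _ => Finset.sum_congr rfl fun i _ => ?_
    have : G i j = G j i := by
      conv_lhs => rw [← hsym]
      rfl
    rw [this]; ring
  have h1 : ∑ i, G.mulVec x i * x i ≤ ∑ i, G.mulVec x' i * x i :=
    Finset.sum_le_sum fun i _ => mul_le_mul_of_nonneg_right (hle i) (hx i)
  have h2 : ∑ i, G.mulVec x i * x' i ≤ ∑ i, G.mulVec x' i * x' i :=
    Finset.sum_le_sum fun i _ => mul_le_mul_of_nonneg_right (hle i) (hx' i)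
  have := h1.trans (key.le.trans h2)
  linarith
end

section
/- Let G ∈ ℝ^{d×d} be symmetric with entries satisfying m/d² ≤ G_{kk'} ≤ M/d² for some 0 < m ≤ M. For the cone 𝒞 = {Gx : x ∈ ℝ_{≥0}^d} and the non-linearity 𝖢(Gx) = (1/2)Gx·x, one has for all y, y' ∈ 𝒞: |𝖢(y) − 𝖢(y')| ≤ (1/m)(‖y‖_{1,*} + ‖y'‖_{1,*}) ‖y − y'‖_{1,*}, where ‖y‖_{1,*} = max_k d|y_k| is the normalized ℓ^{1,*} norm. -/
/-- The normalized ℓ^{1,*} norm on ℝ^d: ‖y‖_{1,*} = max_k d|y_k|. -/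
noncomputable def normStar (d : ℕ) (y : Fin d → ℝ) : ℝ := ⨆ k, (d : ℝ) * |y k|

lemma le_normStar (d : ℕ) (y : Fin d → ℝ) (k : Fin d) :
    (d : ℝ) * |y k| ≤ normStar d y := by
  have h := le_ciSup (f := fun k => (d : ℝ) * |y k|)
    (Set.Finite.bddAbove (Set.finite_range _)) k
  simpa [normStar] using h

/-- Local Lipschitz continuity of the non-linearity 𝖢(Gx) = (1/2) Gx·x on the cone
𝒞 = {Gx : x ∈ ℝ_{≥0}^d}, with respect to the normalized ℓ^{1,*} norm. -/
theorem nonlinearity_locally_lipschitz (d : ℕ) (hd : 0 < d) (m M : ℝ)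
    (hm : 0 < m) (hmM : m ≤ M)
    (G : Matrix (Fin d) (Fin d) ℝ) (hsym : G.IsSymm)
    (hlow : ∀ k k', m / (d : ℝ) ^ 2 ≤ G k k')
    (hup : ∀ k k', G k k' ≤ M / (d : ℝ) ^ 2)
    (x x' : Fin d → ℝ) (hx : ∀ i, 0 ≤ x i) (hx' : ∀ i, 0 ≤ x' i) :
    |(1 / 2) * ∑ i, G.mulVec x i * x i - (1 / 2) * ∑ i, G.mulVec x' i * x' i| ≤
      (1 / m) * (normStar d (G.mulVec x) + normStar d (G.mulVec x')) *
        normStar d (G.mulVec x - G.mulVec x') := by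
  have hd' : (0 : ℝ) < d := by exact_mod_cast hd
  set y := G.mulVec x with hy
  set y' := G.mulVec x' with hy'
  set A := normStar d y with hA
  set B := normStar d y' with hB
  set N := normStar d (y - y') with hN
  set k0 : Fin d := ⟨0, hd⟩
  have hyk : ∀ k, y k = ∑ j, G k j * x j := by
    intro k; simp [hy, Matrix.mulVec, dotProduct]
  have hyk' : ∀ k, y' k = ∑ j, G k j * x' j := by
    intro k; simp [hy', Matrix.mulVec, dotProduct]
  have hG0 : ∀ k k', (0 : ℝ) ≤ G k k' := fun k k' =>
    le_trans (by positivity) (hlow k k')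
  have hy0 : ∀ k, 0 ≤ y k := fun k => by
    rw [hyk]; exact Finset.sum_nonneg fun j _ => mul_nonneg (hG0 k j) (hx j)
  have hy'0 : ∀ k, 0 ≤ y' k := fun k => by
    rw [hyk']; exact Finset.sum_nonneg fun j _ => mul_nonneg (hG0 k j) (hx' j)
  have hN0 : 0 ≤ N := le_trans (by positivity) (le_normStar d (y - y') k0)
  have hA0 : 0 ≤ A := le_trans (by positivity) (le_normStar d y k0)
  have hB0 : 0 ≤ B := le_trans (by positivity) (le_normStar d y' k0)
  set S := ∑ j, (x j + x' j) with hS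
  have hS0 : 0 ≤ S := Finset.sum_nonneg fun j _ => add_nonneg (hx j) (hx' j)
  -- Key auxiliary bound: m/d^2 * S ≤ y k0 + y' k0 ≤ (A + B)/d
  have hkey : m / (d : ℝ) ^ 2 * S ≤ (A + B) / d := by
    have h1 : m / (d : ℝ) ^ 2 * S ≤ y k0 + y' k0 := by
      rw [hyk, hyk', ← Finset.sum_add_distrib, hS, Finset.mul_sum]
      refine Finset.sum_le_sum fun j _ => ?_
      have := hlow k0 j
      nlinarith [hx j, hx' j]
    have h2 : y k0 ≤ A / d := by
      have := le_normStar d y k0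
      rw [abs_of_nonneg (hy0 k0)] at this
      rw [le_div_iff₀ hd']; linarith
    have h3 : y' k0 ≤ B / d := by
      have := le_normStar d y' k0
      rw [abs_of_nonneg (hy'0 k0)] at this
      rw [le_div_iff₀ hd']; linarith
    calc m / (d : ℝ) ^ 2 * S ≤ y k0 + y' k0 := h1
      _ ≤ A / d + B / d := add_le_add h2 h3
      _ = (A + B) / d := by ring
  have hSle : m * S ≤ d * (A + B) := by
    have h := mul_le_mul_of_nonneg_left hkey (le_of_lt (pow_pos hd' 2))
    calc m * S = (d : ℝ) ^ 2 * (m / (d : ℝ) ^ 2 * S) := by field_simp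
      _ ≤ (d : ℝ) ^ 2 * ((A + B) / d) := h
      _ = d * (A + B) := by field_simp
  -- symmetry swap
  have hswap : ∑ i, y i * x' i = ∑ i, y' i * x i := by
    simp only [hyk, hyk', Finset.sum_mul]
    rw [Finset.sum_comm]
    refine Finset.sum_congr rfl fun i _ => Finset.sum_congr rfl fun j _ => ?_
    rw [hsym.apply i j]; ring
  have hid : (1 / 2) * ∑ i, y i * x i - (1 / 2) * ∑ i, y' i * x' i
      = (1 / 2) * ∑ i, (y i - y' i) * (x i + x' i) := by
    have : ∑ i, (y i - y' i) * (x i + x' i)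
        = ∑ i, y i * x i + ∑ i, y i * x' i - (∑ i, y' i * x i + ∑ i, y' i * x' i) := by
      rw [← Finset.sum_add_distrib, ← Finset.sum_add_distrib, ← Finset.sum_sub_distrib]
      refine Finset.sum_congr rfl fun i _ => by ring
    rw [this, hswap]; ring
  rw [hid]
  have hbound : |(1 / 2) * ∑ i, (y i - y' i) * (x i + x' i)| ≤ (1/2) * (N / d * S) := by
    rw [abs_mul]
    have h1 : |∑ i, (y i - y' i) * (x i + x' i)| ≤ ∑ i, N / d * (x i + x' i) := by
      refine le_trans (Finset.abs_sum_le_sum_abs _ _) (Finset.sum_le_sum fun i _ => ?_)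
      rw [abs_mul, abs_of_nonneg (add_nonneg (hx i) (hx' i))]
      refine mul_le_mul_of_nonneg_right ?_ (add_nonneg (hx i) (hx' i))
      have := le_normStar d (y - y') i
      simp only [Pi.sub_apply] at this
      rw [le_div_iff₀ hd']; linarith
    rw [← Finset.mul_sum] at h1
    have : |(1:ℝ)/2| = 1/2 := by norm_num
    rw [this]
    have : N / d * S = N / d * ∑ i, (x i + x' i) := by rw [hS]
    rw [this]
    linarith
  refine le_trans hbound ?_
  have hT : (d : ℝ) * (N / d * S) = N * S := by field_simp
  have h1 : m * (N * S) ≤ (d : ℝ) * ((A + B) * N) := by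
    nlinarith [mul_le_mul_of_nonneg_right hSle hN0]
  have h3 : m * (N / d * S) ≤ (A + B) * N := by
    refine le_of_mul_le_mul_left ?_ hd'
    calc (d : ℝ) * (m * (N / d * S)) = m * ((d : ℝ) * (N / d * S)) := by ring
      _ = m * (N * S) := by rw [hT]
      _ ≤ (d : ℝ) * ((A + B) * N) := h1
  have hT0 : 0 ≤ N / d * S := mul_nonneg (div_nonneg hN0 hd'.le) hS0
  calc (1/2) * (N / d * S) ≤ N / d * S := by linarith
    _ ≤ (1/m) * ((A + B) * N) := by
        rw [one_div, inv_mul_eq_div, le_div_iff₀ hm]; linarith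
    _ = (1 / m) * (A + B) * N := by ring
end

section
/- Let 𝒦 ⊂ ℝ^d be a closed convex set and ψ : ℝ^d → ℝ a Lipschitz function. Then ∇ψ(x) ∈ 𝒦 for almost every x if and only if: for every c ∈ ℝ and x, x' ∈ ℝ^d such that (x' − x)·z ≥ c for all z ∈ 𝒦, one has ψ(x') − ψ(x) ≥ c. -/
open MeasureTheory Filter Topology

open Filter Topology in
private lemma oneDimFTC {f : ℝ → ℝ} {L : NNReal} (hf : LipschitzWith L f) {c : ℝ}
    (h : ∀ᵐ t ∂(volume : Measure ℝ), DifferentiableAt ℝ f t ∧ c ≤ deriv f t) :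
    c ≤ f 1 - f 0 := by
  have hcont : Continuous f := hf.continuous
  set u : ℕ → ℝ := fun n => 1 / (n + 1) with hu_def
  have hu_pos : ∀ n, 0 < u n := fun n => by positivity
  have hu_tend : Tendsto u atTop (𝓝 0) := tendsto_one_div_add_atTop_nhds_zero_nat
  set F : ℕ → ℝ → ℝ := fun n t => (f (t + u n) - f t) / u n with hF_def
  -- pointwise convergence at differentiability points
  have hptwise : ∀ t : ℝ, DifferentiableAt ℝ f t →
      Tendsto (fun n => F n t) atTop (𝓝 (deriv f t)) := by
    intro t ht
    have hslope := hasDerivAt_iff_tendsto_slope.1 ht.hasDerivAt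
    have hseq : Tendsto (fun n => t + u n) atTop (𝓝[≠] t) := by
      apply tendsto_nhdsWithin_of_tendsto_nhds_of_eventually_within
      · simpa using (tendsto_const_nhds.add hu_tend)
      · exact Eventually.of_forall fun n => by
          simp only [Set.mem_compl_iff, Set.mem_singleton_iff]
          have := hu_pos n; intro hc; nlinarith [hu_pos n]
    have := hslope.comp hseq
    convert this using 2 with n
    simp [hF_def, slope, vsub_eq_sub, div_eq_inv_mul]
  -- uniform bound
  have hbound : ∀ n t, |F n t| ≤ (L : ℝ) := by
    intro n t
    rw [hF_def]
    simp only []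
    rw [abs_div, abs_of_pos (hu_pos n), div_le_iff₀ (hu_pos n)]
    have := hf.dist_le_mul (t + u n) t
    simpa [Real.dist_eq, abs_of_pos (hu_pos n)] using this
  have hFcont : ∀ n, Continuous (F n) :=
    fun n => ((hcont.comp (continuous_id.add continuous_const)).sub hcont).div_const _
  -- deriv f is bounded by L everywhere
  have hderiv_bound : ∀ t, |deriv f t| ≤ (L : ℝ) := by
    intro t
    by_cases hd : DifferentiableAt ℝ f t
    · simpa [Real.norm_eq_abs] using norm_deriv_le_of_lipschitz hf (x₀ := t)
    · simp [deriv_zero_of_not_differentiableAt hd]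
  -- DCT: ∫_{Ioc 0 1} F n → ∫_{Ioc 0 1} deriv f
  have hIoc_fin : (volume : Measure ℝ) (Set.Ioc (0:ℝ) 1) < ⊤ := by simp
  have hconst_int : Integrable (fun _ : ℝ => (L : ℝ)) (volume.restrict (Set.Ioc (0:ℝ) 1)) := by
    apply integrableOn_const hIoc_fin.ne
  have hDCT : Tendsto (fun n => ∫ t in Set.Ioc (0:ℝ) 1, F n t) atTop
      (𝓝 (∫ t in Set.Ioc (0:ℝ) 1, deriv f t)) := by
    refine tendsto_integral_of_dominated_convergence (fun _ => (L : ℝ))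
      (fun n => ((hFcont n).aestronglyMeasurable).restrict) hconst_int
      (fun n => Eventually.of_forall fun t => by simpa [Real.norm_eq_abs] using hbound n t) ?_
    · filter_upwards [ae_restrict_of_ae h] with t ht
      exact hptwise t ht.1
  -- explicit computation of ∫ F n and its limit
  have hint : ∀ a b : ℝ, IntervalIntegrable f volume a b := fun a b => hcont.intervalIntegrable a b
  have hcalc : ∀ n, ∫ t in (0:ℝ)..1, F n t
      = ((∫ t in (1:ℝ)..(1 + u n), f t) - ∫ t in (0:ℝ)..(u n), f t) / u n := by
    intro n
    have h1 : ∫ t in (0:ℝ)..1, (f (t + u n) - f t)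
        = (∫ t in (0:ℝ)..1, f (t + u n)) - ∫ t in (0:ℝ)..1, f t := by
      apply intervalIntegral.integral_sub
      · exact (hcont.comp (continuous_id.add continuous_const)).intervalIntegrable 0 1
      · exact hint 0 1
    have h2 : (∫ t in (0:ℝ)..1, f (t + u n)) = ∫ t in (u n)..(1 + u n), f t := by
      simpa [zero_add, add_comm] using intervalIntegral.integral_comp_add_right (a := (0:ℝ)) (b := 1) (f := f) (u n)
    have h3 : (∫ t in (u n)..(1 + u n), f t) = (∫ t in (u n)..1, f t) + ∫ t in (1:ℝ)..(1 + u n), f t :=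
      (intervalIntegral.integral_add_adjacent_intervals (hint _ _) (hint _ _)).symm
    have h4 : (∫ t in (0:ℝ)..1, f t) = (∫ t in (0:ℝ)..(u n), f t) + ∫ t in (u n)..1, f t :=
      (intervalIntegral.integral_add_adjacent_intervals (hint _ _) (hint _ _)).symm
    have : ∫ t in (0:ℝ)..1, F n t = (∫ t in (0:ℝ)..1, (f (t + u n) - f t)) / u n := by
      rw [← intervalIntegral.integral_div]
    rw [this, h1, h2, h3, h4]; ring_nf
  have hlim2 : Tendsto (fun n => ∫ t in (0:ℝ)..1, F n t) atTop (𝓝 (f 1 - f 0)) := by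
    rw [← tendsto_sub_nhds_zero_iff]
    refine squeeze_zero_norm (a := fun n => 2 * (L : ℝ) * u n) (fun n => ?_) ?_
    · rw [hcalc n]
      set A := ∫ t in (1:ℝ)..(1 + u n), f t with hA
      set B := ∫ t in (0:ℝ)..(u n), f t with hB
      have babs : ∀ (a b : ℝ), a ≤ b → b - a ≤ u n →
          |(∫ t in a..b, f t) - (b - a) * f a| ≤ (L : ℝ) * u n * (b - a) := by
        intro a b hab hlen
        have e1 : ∫ t in a..b, (f a : ℝ) = (b - a) * f a := by
          rw [intervalIntegral.integral_const, smul_eq_mul]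
        rw [← e1, ← intervalIntegral.integral_sub (hint _ _) intervalIntegrable_const]
        have hnb : ∀ t ∈ Set.uIoc a b, ‖f t - f a‖ ≤ (L : ℝ) * u n := by
          intro t ht
          rw [Set.uIoc_of_le hab] at ht
          have hd := hf.dist_le_mul t a
          rw [Real.dist_eq, Real.dist_eq] at hd
          have h5 : |t - a| ≤ u n := by
            rw [abs_le]; constructor
            · linarith [ht.1]
            · linarith [ht.2]
          calc ‖f t - f a‖ = |f t - f a| := Real.norm_eq_abs _
            _ ≤ (L:ℝ) * |t - a| := hd
            _ ≤ (L:ℝ) * u n := by nlinarith [abs_nonneg (t-a), L.coe_nonneg]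
        have := intervalIntegral.norm_integral_le_of_norm_le_const hnb
        rw [Real.norm_eq_abs] at this
        calc |∫ t in a..b, (f t - f a)| ≤ (L:ℝ) * u n * |b - a| := this
          _ = (L:ℝ) * u n * (b - a) := by rw [abs_of_nonneg (by linarith)]
      have b1 : |A - u n * f 1| ≤ (L : ℝ) * u n * u n := by
        have := babs 1 (1 + u n) (by linarith [hu_pos n]) (by ring_nf; rfl)
        simpa [hA, add_sub_cancel_left] using this
      have b2 : |B - u n * f 0| ≤ (L : ℝ) * u n * u n := by
        have := babs 0 (u n) (le_of_lt (hu_pos n)) (by simp)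
        simpa [hB] using this
      have hne : u n ≠ 0 := (hu_pos n).ne'
      have key : (A - B) / u n - (f 1 - f 0)
          = ((A - u n * f 1) - (B - u n * f 0)) / u n := by
        field_simp; ring
      rw [key, Real.norm_eq_abs, abs_div, abs_of_pos (hu_pos n), div_le_iff₀ (hu_pos n)]
      calc |A - u n * f 1 - (B - u n * f 0)| ≤ |A - u n * f 1| + |B - u n * f 0| := abs_sub _ _
        _ ≤ (L:ℝ) * u n * u n + (L:ℝ) * u n * u n := add_le_add b1 b2
        _ = 2 * (L:ℝ) * u n * u n := by ring
    · simpa using (tendsto_const_nhds.mul hu_tend :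
        Tendsto (fun n => 2 * (L:ℝ) * u n) atTop (𝓝 (2 * (L:ℝ) * 0)))
  -- combine limits
  have hIoc_eq : ∀ n, (∫ t in (0:ℝ)..1, F n t) = ∫ t in Set.Ioc (0:ℝ) 1, F n t :=
    fun n => intervalIntegral.integral_of_le zero_le_one
  have heq : f 1 - f 0 = ∫ t in Set.Ioc (0:ℝ) 1, deriv f t := by
    apply tendsto_nhds_unique _ hDCT
    simpa only [hIoc_eq] using hlim2
  rw [heq]
  have hderiv_int : Integrable (deriv f) (volume.restrict (Set.Ioc (0:ℝ) 1)) := by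
    refine Integrable.mono' hconst_int ((measurable_deriv f).aestronglyMeasurable.restrict) ?_
    exact Eventually.of_forall fun t => by simpa [Real.norm_eq_abs] using hderiv_bound t
  have hcint : (∫ _ in Set.Ioc (0:ℝ) 1, c ∂(volume : Measure ℝ)) = c := by
    simp
  rw [← hcint]
  refine integral_mono_ae (integrableOn_const hIoc_fin.ne) hderiv_int ?_
  filter_upwards [ae_restrict_of_ae h] with t ht using ht.2

open Filter Topology in
private lemma ae_ae_line {d : ℕ} (v : EuclideanSpace ℝ (Fin d))
    {P : EuclideanSpace ℝ (Fin d) → Prop}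
    (hP : ∀ᵐ x ∂(volume : Measure (EuclideanSpace ℝ (Fin d))), P x) :
    ∀ᵐ x ∂(volume : Measure (EuclideanSpace ℝ (Fin d))),
      ∀ᵐ t ∂(volume : Measure ℝ), P (x + t • v) := by
  set μ : Measure (EuclideanSpace ℝ (Fin d)) := volume
  set ν : Measure ℝ := volume
  rw [ae_iff] at hP
  obtain ⟨N, hNsub, hNmeas, hNnull⟩ := exists_measurable_superset_of_null hP
  have hmap : Measurable fun p : EuclideanSpace ℝ (Fin d) × ℝ => p.1 + p.2 • v :=
    (measurable_fst.add (measurable_snd.smul_const v))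
  have hs : MeasurableSet {p : EuclideanSpace ℝ (Fin d) × ℝ | p.1 + p.2 • v ∈ N} :=
    hmap hNmeas
  have hnull : (μ.prod ν) {p : EuclideanSpace ℝ (Fin d) × ℝ | p.1 + p.2 • v ∈ N} = 0 := by
    rw [Measure.prod_apply_symm hs]
    have : ∀ t : ℝ, μ ((fun x : EuclideanSpace ℝ (Fin d) => (x, t)) ⁻¹'
        {p : EuclideanSpace ℝ (Fin d) × ℝ | p.1 + p.2 • v ∈ N}) = 0 := by
      intro t
      have : ((fun x : EuclideanSpace ℝ (Fin d) => (x, t)) ⁻¹'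
          {p : EuclideanSpace ℝ (Fin d) × ℝ | p.1 + p.2 • v ∈ N})
          = (fun x => x + t • v) ⁻¹' N := rfl
      rw [this, measure_preimage_add_right μ (t • v) N]
      exact hNnull
    simp only [this, lintegral_zero]
  have hae : ∀ᵐ p ∂(μ.prod ν), p.1 + p.2 • v ∉ N := by
    rw [ae_iff]
    simpa using hnull
  have := Measure.ae_ae_of_ae_prod hae
  filter_upwards [this] with x hx
  filter_upwards [hx] with t ht
  by_contra hcon
  exact ht (hNsub hcon)

private lemma inner_gradient_eq' {d : ℕ} (ψ : EuclideanSpace ℝ (Fin d) → ℝ) (x v : EuclideanSpace ℝ (Fin d)) :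
    (inner ℝ (gradient ψ x) v : ℝ) = fderiv ℝ ψ x v := by
  rw [gradient, ← InnerProductSpace.toDual_apply_apply, LinearIsometryEquiv.apply_symm_apply]


/-- Non-differential characterization of a Lipschitz function having its
(almost everywhere defined) gradient in a closed convex set 𝒦 ⊂ ℝ^d. -/
theorem gradient_in_convex_set_iff (d : ℕ) (K : Set (EuclideanSpace ℝ (Fin d)))
    (hcl : IsClosed K) (hconv : Convex ℝ K)
    (ψ : EuclideanSpace ℝ (Fin d) → ℝ) (L : NNReal) (hψ : LipschitzWith L ψ) :
    (∀ᵐ x ∂(volume : Measure (EuclideanSpace ℝ (Fin d))),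
        DifferentiableAt ℝ ψ x ∧ gradient ψ x ∈ K) ↔
      (∀ (c : ℝ) (x x' : EuclideanSpace ℝ (Fin d)),
        (∀ z ∈ K, c ≤ (inner ℝ (x' - x) z : ℝ)) → c ≤ ψ x' - ψ x) := by
  constructor
  · intro H
    intro c x x' hz
    set v : EuclideanSpace ℝ (Fin d) := x' - x with hv
    have hae := ae_ae_line v H
    have hS : ∀ᵐ y ∂(volume : Measure (EuclideanSpace ℝ (Fin d))), c ≤ ψ (y + v) - ψ y := by
      filter_upwards [hae] with y hy
      set f : ℝ → ℝ := fun t => ψ (y + t • v) with hf_def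
      have hlip_line : LipschitzWith ‖v‖₊ (fun t : ℝ => y + t • v) := by
        apply LipschitzWith.of_dist_le_mul
        intro s t
        rw [dist_eq_norm, dist_eq_norm]
        have : (y + s • v) - (y + t • v) = (s - t) • v := by
          rw [sub_smul]; abel
        rw [this, norm_smul]
        simp [mul_comm]
      have hfl : LipschitzWith (L * ‖v‖₊) f := hψ.comp hlip_line
      have hder : ∀ᵐ t ∂(volume : Measure ℝ), DifferentiableAt ℝ f t ∧ c ≤ deriv f t := by
        filter_upwards [hy] with t ht
        have hline : HasDerivAt (fun s : ℝ => y + s • v) v t := by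
          simpa using ((hasDerivAt_id t).smul_const v).const_add y
        have hcomp : HasDerivAt f (fderiv ℝ ψ (y + t • v) v) t :=
          (ht.1.hasFDerivAt).comp_hasDerivAt t hline
        refine ⟨hcomp.differentiableAt, ?_⟩
        rw [hcomp.deriv, ← inner_gradient_eq', real_inner_comm]
        exact hz _ ht.2
      have := oneDimFTC hfl hder
      simpa [hf_def] using this
    -- from a.e. to everywhere by continuity
    set S : Set (EuclideanSpace ℝ (Fin d)) := {y | c ≤ ψ (y + v) - ψ y} with hS_def
    have hclosedS : IsClosed S := by
      apply isClosed_le continuous_const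
      exact (hψ.continuous.comp (continuous_id.add continuous_const)).sub hψ.continuous
    have hcompl : Sᶜ = ∅ := by
      by_contra hne
      have hpos : 0 < (volume : Measure (EuclideanSpace ℝ (Fin d))) Sᶜ :=
        hclosedS.isOpen_compl.measure_pos volume (Set.nonempty_iff_ne_empty.2 hne)
      have hzero : (volume : Measure (EuclideanSpace ℝ (Fin d))) Sᶜ = 0 := by
        rw [ae_iff] at hS
        simpa [hS_def, Set.compl_setOf] using hS
      exact hpos.ne' hzero
    have hxS : x ∈ S := by
      by_contra hxn
      rw [← Set.mem_compl_iff, hcompl] at hxn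
      exact hxn
    have : c ≤ ψ (x + v) - ψ x := hxS
    simpa [hv] using this
  · intro H
    filter_upwards [hψ.ae_differentiableAt (μ := volume)] with x hx
    refine ⟨hx, ?_⟩
    by_contra hK
    obtain ⟨φ, u, hφ, hu⟩ := geometric_hahn_banach_closed_point hconv hcl hK
    set w := (InnerProductSpace.toDual ℝ (EuclideanSpace ℝ (Fin d))).symm φ with hw
    have hwz : ∀ z : EuclideanSpace ℝ (Fin d), (inner ℝ w z : ℝ) = φ z := fun z => by
      rw [hw, InnerProductSpace.toDual_symm_apply]
    set v : EuclideanSpace ℝ (Fin d) := -w with hv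
    have hvz : ∀ z ∈ K, -u ≤ (inner ℝ v z : ℝ) := fun z hz => by
      have h1 := hφ z hz
      have : (inner ℝ v z : ℝ) = -(φ z) := by rw [hv, inner_neg_left, hwz]
      rw [this]; linarith
    have hgrad : (inner ℝ v (gradient ψ x) : ℝ) < -u := by
      have : (inner ℝ v (gradient ψ x) : ℝ) = -(φ (gradient ψ x)) := by
        rw [hv, inner_neg_left, hwz]
      rw [this]; linarith
    -- derivative along direction v at x
    have h0 : HasDerivAt (fun t : ℝ => x + t • v) v 0 := by
      simpa using ((hasDerivAt_id (0:ℝ)).smul_const v).const_add x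
    have hline : HasDerivAt (fun t : ℝ => ψ (x + t • v)) (fderiv ℝ ψ x v) 0 := by
      have hx0 : HasFDerivAt ψ (fderiv ℝ ψ x) (x + (0:ℝ) • v) := by simpa using hx.hasFDerivAt
      exact hx0.comp_hasDerivAt 0 h0
    have hquot : Tendsto (fun t : ℝ => (ψ (x + t • v) - ψ x) / t) (𝓝[>] 0)
        (𝓝 (fderiv ℝ ψ x v)) := by
      have hs := hasDerivAt_iff_tendsto_slope.1 hline
      have hmono : (𝓝[>] (0:ℝ)) ≤ 𝓝[≠] (0:ℝ) :=
        nhdsWithin_mono _ (fun t ht => ne_of_gt ht)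
      have := hs.mono_left hmono
      apply this.congr
      intro t
      simp [slope, vsub_eq_sub, div_eq_inv_mul]
    have hev : ∀ᶠ t in 𝓝[>] (0:ℝ), -u ≤ (ψ (x + t • v) - ψ x) / t := by
      apply eventually_nhdsWithin_of_forall
      intro t ht
      have ht' : (0:ℝ) < t := ht
      have happ := H (t * -u) x (x + t • v) ?_
      · rw [le_div_iff₀ ht']
        calc -u * t = t * -u := by ring
          _ ≤ ψ (x + t • v) - ψ x := happ
      · intro z hz
        have : ((x + t • v) - x) = t • v := by abel
        rw [this, real_inner_smul_left]
        have := hvz z hz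
        nlinarith
    have hle : -u ≤ fderiv ℝ ψ x v := ge_of_tendsto hquot hev
    rw [← inner_gradient_eq'] at hle
    rw [real_inner_comm] at hgrad
    linarith
end

section
/- Let G ∈ ℝ^{d×d} be symmetric non-negative definite with strictly positive entries, and define ‖x‖_G = √(Gx·x). Then for every z ∈ 𝒞 = {Gx : x ∈ ℝ_{≥0}^d}, one has 𝖢(z) = sup_{y ∈ ℝ_{≥0}^d} { y·z − ‖y‖_G²/2 }, where 𝖢(Gx) = ‖x‖_G²/2; moreover the supremum is attained at any x ∈ ℝ_{≥0}^d with z = Gx. -/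
/-- Convex duality for the non-linearity 𝖢(Gx) = ‖x‖_G²/2: for every z = Gx in the cone
𝒞 = {Gx : x ∈ ℝ_{≥0}^d}, one has 𝖢(z) = sup_{y ≥ 0} { y·z − ‖y‖_G²/2 }, with the
supremum attained (in particular at any x ≥ 0 with z = Gx). -/
theorem hopflax_convex_dual (d : ℕ) (G : Matrix (Fin d) (Fin d) ℝ)
    (hsym : G.IsSymm)
    (hpsd : ∀ y : Fin d → ℝ, 0 ≤ ∑ i, G.mulVec y i * y i)
    (hpos : ∀ k k', 0 < G k k')
    (x : Fin d → ℝ) (hx : ∀ i, 0 ≤ x i) :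
    IsGreatest
      {r : ℝ | ∃ y : Fin d → ℝ, (∀ i, 0 ≤ y i) ∧
        r = (∑ i, y i * G.mulVec x i) - (∑ i, G.mulVec y i * y i) / 2}
      ((∑ i, G.mulVec x i * x i) / 2) ∧
    (∑ i, x i * G.mulVec x i) - (∑ i, G.mulVec x i * x i) / 2 =
      (∑ i, G.mulVec x i * x i) / 2 := by
  have symm : ∀ a b : Fin d → ℝ,
      ∑ i, G.mulVec a i * b i = ∑ i, G.mulVec b i * a i := by
    intro a b
    simp only [Matrix.mulVec, dotProduct, Finset.sum_mul]
    rw [Finset.sum_comm]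
    refine Finset.sum_congr rfl fun i _ => Finset.sum_congr rfl fun j _ => ?_
    rw [hsym.apply j i]
    ring
  have hcomm : ∀ a : Fin d → ℝ,
      ∑ i, a i * G.mulVec x i = ∑ i, G.mulVec x i * a i := by
    intro a; exact Finset.sum_congr rfl fun i _ => mul_comm _ _
  constructor
  · constructor
    · exact ⟨x, hx, by rw [hcomm x]; ring⟩
    · rintro r ⟨y, hy, rfl⟩
      have h := hpsd (x - y)
      have hexp : ∑ i, G.mulVec (x - y) i * (x - y) i =
          (∑ i, G.mulVec x i * x i) - (∑ i, G.mulVec x i * y i)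
            - (∑ i, G.mulVec y i * x i) + ∑ i, G.mulVec y i * y i := by
        simp only [Matrix.mulVec_sub, Pi.sub_apply]
        rw [← Finset.sum_sub_distrib, ← Finset.sum_sub_distrib, ← Finset.sum_add_distrib]
        exact Finset.sum_congr rfl fun i _ => by ring
      have hs := symm y x
      rw [hcomm y]
      rw [hexp, ← hs] at h
      linarith
  · rw [hcomm x]; ring
end

section
/- Let G ∈ ℝ^{d×d} be symmetric non-negative definite with entries ≥ m/d² > 0, and ψ : ℝ_{≥0}^d → ℝ Lipschitz in the normalized ℓ^1 norm. Then the Hopf-Lax function f_HL(t,x) = sup_{y ∈ ℝ_{≥0}^d} { ψ(x+y) − ‖y‖_G²/(2t) } satisfies the semigroup property: for all t > s > 0 and x ∈ ℝ_{≥0}^d, f_HL(t,x) = sup_{y ∈ ℝ_{≥0}^d} { f_HL(s, x+y) − ‖y‖_G²/(2(t−s)) }. -/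
/-- The normalized ℓ^1 norm on ℝ^d: ‖x‖_1 = (1/d)∑_k |x_k|. -/
noncomputable def norm1 (d : ℕ) (x : Fin d → ℝ) : ℝ := (1 / (d : ℝ)) * ∑ k, |x k|

/-- The Hopf-Lax function f_HL(t,x) = sup_{y ≥ 0} { ψ(x+y) − ‖y‖_G²/(2t) }. -/
noncomputable def fHL (d : ℕ) (G : Matrix (Fin d) (Fin d) ℝ) (ψ : (Fin d → ℝ) → ℝ)
    (t : ℝ) (x : Fin d → ℝ) : ℝ :=
  sSup {r : ℝ | ∃ y : Fin d → ℝ, (∀ i, 0 ≤ y i) ∧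
    r = ψ (x + y) - (∑ i, G.mulVec y i * y i) / (2 * t)}

lemma aux_ineq (m L u t' : ℝ) (hm : 0 < m) (ht' : 0 < t') :
    L * u ≤ m * u ^ 2 / (2 * t') + L ^ 2 * t' / (2 * m) := by
  rw [div_add_div _ _ (by positivity) (by positivity), le_div_iff₀ (by positivity)]
  nlinarith [sq_nonneg (m * u - L * t')]

lemma qscale (d : ℕ) (G : Matrix (Fin d) (Fin d) ℝ) (c : ℝ) (w : Fin d → ℝ) :
    ∑ i, G.mulVec (c • w) i * (c • w) i = c ^ 2 * ∑ i, G.mulVec w i * w i := by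
  simp only [Matrix.mulVec_smul, Pi.smul_apply, smul_eq_mul]
  rw [Finset.mul_sum]
  exact Finset.sum_congr rfl fun i _ => by ring

lemma qexpand (d : ℕ) (G : Matrix (Fin d) (Fin d) ℝ) (a b : ℝ) (y z : Fin d → ℝ) :
    ∑ i, G.mulVec (a • y + b • z) i * (a • y + b • z) i
      = a ^ 2 * (∑ i, G.mulVec y i * y i)
        + a * b * ((∑ i, G.mulVec y i * z i) + (∑ i, G.mulVec z i * y i))
        + b ^ 2 * (∑ i, G.mulVec z i * z i) := by
  have h : ∀ i, G.mulVec (a • y + b • z) i = a * G.mulVec y i + b * G.mulVec z i := by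
    intro i
    simp [Matrix.mulVec_add, Matrix.mulVec_smul]
  calc ∑ i, G.mulVec (a • y + b • z) i * (a • y + b • z) i
      = ∑ i, (a ^ 2 * (G.mulVec y i * y i) + a * b * (G.mulVec y i * z i)
          + a * b * (G.mulVec z i * y i) + b ^ 2 * (G.mulVec z i * z i)) := by
        refine Finset.sum_congr rfl fun i _ => ?_
        rw [h i]
        simp only [Pi.add_apply, Pi.smul_apply, smul_eq_mul]
        ring
    _ = _ := by
        simp only [Finset.sum_add_distrib, ← Finset.mul_sum]
        ring

lemma keyineq (d : ℕ) (G : Matrix (Fin d) (Fin d) ℝ)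
    (hpsd : ∀ y : Fin d → ℝ, 0 ≤ ∑ i, G.mulVec y i * y i)
    (s t : ℝ) (hs : 0 < s) (hst : s < t) (y z : Fin d → ℝ) :
    (∑ i, G.mulVec (y + z) i * (y + z) i) / (2 * t)
      ≤ (∑ i, G.mulVec y i * y i) / (2 * (t - s))
        + (∑ i, G.mulVec z i * z i) / (2 * s) := by
  have hts : 0 < t - s := sub_pos.mpr hst
  have ht : 0 < t := hs.trans hst
  have h0 := hpsd (s • y + (-(t - s)) • z)
  rw [qexpand] at h0
  have h1 : ∑ i, G.mulVec (y + z) i * (y + z) i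
      = (∑ i, G.mulVec y i * y i)
        + ((∑ i, G.mulVec y i * z i) + (∑ i, G.mulVec z i * y i))
        + (∑ i, G.mulVec z i * z i) := by
    have h2 := qexpand d G 1 1 y z
    simpa using h2
  rw [h1, div_add_div _ _ (by positivity) (by positivity),
    div_le_div_iff₀ (by positivity) (by positivity)]
  nlinarith [h0]

lemma coercive (d : ℕ) (m : ℝ) (G : Matrix (Fin d) (Fin d) ℝ)
    (hlow : ∀ k k', m / (d : ℝ) ^ 2 ≤ G k k')
    (w : Fin d → ℝ) (hw : ∀ i, 0 ≤ w i) :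
    m / (d : ℝ) ^ 2 * (∑ k, w k) ^ 2 ≤ ∑ i, G.mulVec w i * w i := by
  have key : ∀ i ∈ Finset.univ (α := Fin d),
      (∑ j, m / (d : ℝ) ^ 2 * (w j * w i)) ≤ G.mulVec w i * w i := by
    intro i _
    simp only [Matrix.mulVec, dotProduct]
    rw [Finset.sum_mul]
    refine Finset.sum_le_sum fun j _ => ?_
    calc m / (d : ℝ) ^ 2 * (w j * w i)
        ≤ G i j * (w j * w i) :=
          mul_le_mul_of_nonneg_right (hlow i j) (mul_nonneg (hw j) (hw i))
      _ = G i j * w j * w i := by ring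
  have hS : (∑ k, w k) ^ 2 = ∑ i, ∑ j, w j * w i := by
    rw [sq, Finset.sum_mul_sum]
    exact Finset.sum_congr rfl fun i _ => Finset.sum_congr rfl fun j _ => mul_comm _ _
  calc m / (d : ℝ) ^ 2 * (∑ k, w k) ^ 2
      = ∑ i, ∑ j, m / (d : ℝ) ^ 2 * (w j * w i) := by
        rw [hS, Finset.mul_sum]
        refine Finset.sum_congr rfl fun i _ => ?_
        rw [Finset.mul_sum]
    _ ≤ ∑ i, G.mulVec w i * w i := Finset.sum_le_sum key

lemma psi_le (d : ℕ) (ψ : (Fin d → ℝ) → ℝ) (L : ℝ)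
    (hψ : ∀ x x' : Fin d → ℝ, (∀ i, 0 ≤ x i) → (∀ i, 0 ≤ x' i) →
      |ψ x - ψ x'| ≤ L * norm1 d (x - x'))
    (x' : Fin d → ℝ) (hx' : ∀ i, 0 ≤ x' i) (w : Fin d → ℝ) (hw : ∀ i, 0 ≤ w i) :
    ψ (x' + w) ≤ ψ x' + L * ((1 / (d : ℝ)) * ∑ k, w k) := by
  have h1 := hψ (x' + w) x' (fun i => add_nonneg (hx' i) (hw i)) hx'
  have h2 : x' + w - x' = w := by ring
  rw [h2] at h1
  have h3 : norm1 d w = (1 / (d : ℝ)) * ∑ k, w k := by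
    rw [norm1]
    congr 1
    exact Finset.sum_congr rfl fun k _ => abs_of_nonneg (hw k)
  rw [h3] at h1
  linarith [(abs_le.mp h1).2]

lemma qlower (d : ℕ) (m : ℝ) (G : Matrix (Fin d) (Fin d) ℝ) (hd : 0 < d)
    (hlow : ∀ k k', m / (d : ℝ) ^ 2 ≤ G k k')
    (w : Fin d → ℝ) (hw : ∀ i, 0 ≤ w i) :
    m * ((1 / (d : ℝ)) * ∑ k, w k) ^ 2 ≤ ∑ i, G.mulVec w i * w i := by
  have hd' : (0 : ℝ) < d := by exact_mod_cast hd
  have he : m * ((1 / (d : ℝ)) * ∑ k, w k) ^ 2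
      = m / (d : ℝ) ^ 2 * (∑ k, w k) ^ 2 := by
    field_simp
  rw [he]
  exact coercive d m G hlow w hw

/-- Semigroup property of the Hopf-Lax function: for t > s > 0 and x ≥ 0,
f_HL(t,x) = sup_{y ≥ 0} { f_HL(s,x+y) − ‖y‖_G²/(2(t−s)) }. -/
theorem hopflax_semigroup (d : ℕ) (hd : 0 < d) (m : ℝ) (hm : 0 < m)
    (G : Matrix (Fin d) (Fin d) ℝ) (hsym : G.IsSymm)
    (hpsd : ∀ y : Fin d → ℝ, 0 ≤ ∑ i, G.mulVec y i * y i)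
    (hlow : ∀ k k', m / (d : ℝ) ^ 2 ≤ G k k')
    (ψ : (Fin d → ℝ) → ℝ) (L : ℝ) (hL : 0 ≤ L)
    (hψ : ∀ x x' : Fin d → ℝ, (∀ i, 0 ≤ x i) → (∀ i, 0 ≤ x' i) →
      |ψ x - ψ x'| ≤ L * norm1 d (x - x'))
    (s t : ℝ) (hs : 0 < s) (hst : s < t) (x : Fin d → ℝ) (hx : ∀ i, 0 ≤ x i) :
    fHL d G ψ t x =
      sSup {r : ℝ | ∃ y : Fin d → ℝ, (∀ i, 0 ≤ y i) ∧
        r = fHL d G ψ s (x + y) - (∑ i, G.mulVec y i * y i) / (2 * (t - s))} := by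
  have hd' : (0 : ℝ) < d := by exact_mod_cast hd
  have hts : 0 < t - s := sub_pos.mpr hst
  have ht : 0 < t := hs.trans hst
  -- basic facts about the Hopf-Lax defining sets
  have hmem0 : ∀ (t' : ℝ) (x' : Fin d → ℝ), ψ x' ∈ {r : ℝ | ∃ y : Fin d → ℝ, (∀ i, 0 ≤ y i) ∧
      r = ψ (x' + y) - (∑ i, G.mulVec y i * y i) / (2 * t')} :=
    fun t' x' => ⟨0, fun i => le_rfl, by simp⟩
  have hub : ∀ (t' : ℝ), 0 < t' → ∀ (x' : Fin d → ℝ), (∀ i, 0 ≤ x' i) →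
      ∀ (w : Fin d → ℝ), (∀ i, 0 ≤ w i) →
      ψ (x' + w) - (∑ i, G.mulVec w i * w i) / (2 * t') ≤ ψ x' + L ^ 2 * t' / (2 * m) := by
    intro t' ht' x' hx' w hw
    have h1 := psi_le d ψ L hψ x' hx' w hw
    have h2 := qlower d m G hd hlow w hw
    have h3 : m * ((1 / (d : ℝ)) * ∑ k, w k) ^ 2 / (2 * t')
        ≤ (∑ i, G.mulVec w i * w i) / (2 * t') := by gcongr
    have h4 := aux_ineq m L ((1 / (d : ℝ)) * ∑ k, w k) t' hm ht'
    linarith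
  have hbdd : ∀ (t' : ℝ), 0 < t' → ∀ (x' : Fin d → ℝ), (∀ i, 0 ≤ x' i) →
      BddAbove {r : ℝ | ∃ y : Fin d → ℝ, (∀ i, 0 ≤ y i) ∧
        r = ψ (x' + y) - (∑ i, G.mulVec y i * y i) / (2 * t')} := by
    intro t' ht' x' hx'
    refine ⟨ψ x' + L ^ 2 * t' / (2 * m), ?_⟩
    rintro r ⟨y, hy, rfl⟩
    exact hub t' ht' x' hx' y hy
  -- boundedness of the RHS set
  have hBbdd : BddAbove {r : ℝ | ∃ y : Fin d → ℝ, (∀ i, 0 ≤ y i) ∧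
      r = fHL d G ψ s (x + y) - (∑ i, G.mulVec y i * y i) / (2 * (t - s))} := by
    refine ⟨ψ x + L ^ 2 * t / (2 * m), ?_⟩
    rintro r ⟨y, hy, rfl⟩
    have hxy : ∀ i, 0 ≤ (x + y) i := fun i => add_nonneg (hx i) (hy i)
    have hf : fHL d G ψ s (x + y) ≤ ψ (x + y) + L ^ 2 * s / (2 * m) := by
      refine csSup_le ⟨ψ (x + y), hmem0 s (x + y)⟩ ?_
      rintro r' ⟨z, hz, rfl⟩
      exact hub s hs (x + y) hxy z hz
    have h1 := psi_le d ψ L hψ x hx y hy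
    have h2 := qlower d m G hd hlow y hy
    have h3 : m * ((1 / (d : ℝ)) * ∑ k, y k) ^ 2 / (2 * (t - s))
        ≤ (∑ i, G.mulVec y i * y i) / (2 * (t - s)) := by gcongr
    have h4 := aux_ineq m L ((1 / (d : ℝ)) * ∑ k, y k) (t - s) hm hts
    have h5 : L ^ 2 * (t - s) / (2 * m) + L ^ 2 * s / (2 * m) = L ^ 2 * t / (2 * m) := by
      field_simp
      ring
    linarith
  have hBne : fHL d G ψ s x ∈ {r : ℝ | ∃ y : Fin d → ℝ, (∀ i, 0 ≤ y i) ∧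
      r = fHL d G ψ s (x + y) - (∑ i, G.mulVec y i * y i) / (2 * (t - s))} :=
    ⟨0, fun i => le_rfl, by simp⟩
  refine le_antisymm ?_ ?_
  · -- fHL t x ≤ sSup B
    refine csSup_le ⟨ψ x, hmem0 t x⟩ ?_
    rintro r ⟨w, hw, rfl⟩
    have hy0 : ∀ i, 0 ≤ (((t - s) / t) • w) i :=
      fun i => mul_nonneg (div_nonneg hts.le ht.le) (hw i)
    have hz0 : ∀ i, 0 ≤ ((s / t) • w) i :=
      fun i => mul_nonneg (div_nonneg hs.le ht.le) (hw i)
    have hyz : ((t - s) / t) • w + (s / t) • w = w := by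
      funext i
      simp only [Pi.add_apply, Pi.smul_apply, smul_eq_mul]
      field_simp
      ring
    have hQy := qscale d G ((t - s) / t) w
    have hQz := qscale d G (s / t) w
    have hsplit : (∑ i, G.mulVec w i * w i) / (2 * t)
        = (∑ i, G.mulVec ((s / t) • w) i * ((s / t) • w) i) / (2 * s)
          + (∑ i, G.mulVec (((t - s) / t) • w) i * (((t - s) / t) • w) i) / (2 * (t - s)) := by
      rw [hQy, hQz]
      field_simp
      ring
    have hmemS : ψ (x + ((t - s) / t) • w + (s / t) • w)
        - (∑ i, G.mulVec ((s / t) • w) i * ((s / t) • w) i) / (2 * s)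
        ∈ {r : ℝ | ∃ z : Fin d → ℝ, (∀ i, 0 ≤ z i) ∧
            r = ψ (x + ((t - s) / t) • w + z) - (∑ i, G.mulVec z i * z i) / (2 * s)} :=
      ⟨(s / t) • w, hz0, rfl⟩
    have hle1 : ψ (x + ((t - s) / t) • w + (s / t) • w)
        - (∑ i, G.mulVec ((s / t) • w) i * ((s / t) • w) i) / (2 * s)
        ≤ fHL d G ψ s (x + ((t - s) / t) • w) :=
      le_csSup (hbdd s hs (x + ((t - s) / t) • w)
        (fun i => add_nonneg (hx i) (hy0 i))) hmemS
    have hxw : x + w = x + ((t - s) / t) • w + (s / t) • w :=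
      (by rw [add_assoc, hyz] : x + ((t - s) / t) • w + (s / t) • w = x + w).symm
    have hstep : ψ (x + w) - (∑ i, G.mulVec w i * w i) / (2 * t)
        ≤ fHL d G ψ s (x + ((t - s) / t) • w)
          - (∑ i, G.mulVec (((t - s) / t) • w) i * (((t - s) / t) • w) i) / (2 * (t - s)) := by
      rw [hxw, hsplit]
      linarith
    exact hstep.trans (le_csSup hBbdd ⟨((t - s) / t) • w, hy0, rfl⟩)
  · refine csSup_le ⟨_, hBne⟩ ?_
    rintro r ⟨y, hy, rfl⟩
    have h1 : fHL d G ψ s (x + y)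
        ≤ fHL d G ψ t x + (∑ i, G.mulVec y i * y i) / (2 * (t - s)) := by
      refine csSup_le ⟨ψ (x + y), hmem0 s (x + y)⟩ ?_
      rintro r' ⟨z, hz, rfl⟩
      have hmemA : ψ (x + (y + z)) - (∑ i, G.mulVec (y + z) i * (y + z) i) / (2 * t)
          ≤ fHL d G ψ t x :=
        le_csSup (hbdd t ht x hx) ⟨y + z, fun i => add_nonneg (hy i) (hz i), rfl⟩
      have hk := keyineq d G hpsd s t hs hst y z
      have hassoc : x + y + z = x + (y + z) := by rw [add_assoc]
      rw [hassoc]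
      linarith
    linarith
end

section
/- Let 𝒦' ⊂ ℝ^d be a closed convex set, and let 𝒜 = {(v,c) ∈ ℝ^d × ℝ : x·v ≥ c for all x ∈ 𝒦', and ‖v‖_1 = 1}. Suppose x ∈ ℝ^d and ε > 0 satisfy x·v ≥ c − ε for all (v,c) ∈ 𝒜. Then there exist y ∈ 𝒦' and z ∈ ℝ^d with x = y + z and ‖z‖_{1,*} ≤ ε. -/
open Pointwise


/-- If x satisfies x·v ≥ c − ε for every half-space representation pair (v,c) of a
closed convex set 𝒦' (with ‖v‖_1 = 1), then x decomposes as x = y + z with y ∈ 𝒦'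
and ‖z‖_{1,*} ≤ ε. -/
theorem near_halfspaces_implies_near_set (d : ℕ) (K' : Set (Fin d → ℝ))
    (hcl : IsClosed K') (hconv : Convex ℝ K') (hne : K'.Nonempty)
    (x : Fin d → ℝ) (ε : ℝ) (hε : 0 < ε)
    (hx : ∀ (v : Fin d → ℝ) (c : ℝ), norm1 d v = 1 →
      (∀ w ∈ K', c ≤ ∑ i, w i * v i) → c - ε ≤ ∑ i, x i * v i) :
    ∃ y ∈ K', ∃ z : Fin d → ℝ, x = y + z ∧ normStar d z ≤ ε := by
  rcases Nat.eq_zero_or_pos d with hd | hd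
  · subst hd
    obtain ⟨y, hy⟩ := hne
    refine ⟨y, hy, 0, Subsingleton.elim _ _, ?_⟩
    simp only [normStar]
    rw [Real.iSup_of_isEmpty]
    exact hε.le
  · have hd0 : (0:ℝ) < d := by exact_mod_cast hd
    set δ : ℝ := ε / d with hδdef
    have hδ : 0 < δ := div_pos hε hd0
    set B : Set (Fin d → ℝ) := {z | ∀ k, |z k| ≤ δ} with hBdef
    have hBconv : Convex ℝ B := by
      intro a ha b hb s t hs ht hst k
      calc |(s • a + t • b) k| = |s * a k + t * b k| := rfl
        _ ≤ |s * a k| + |t * b k| := abs_add_le _ _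
        _ = s * |a k| + t * |b k| := by rw [abs_mul, abs_mul, abs_of_nonneg hs, abs_of_nonneg ht]
        _ ≤ s * δ + t * δ := by gcongr; exacts [ha k, hb k]
        _ = δ := by rw [← add_mul, hst, one_mul]
    have hBcomp : IsCompact B := by
      have hBeq : B = Set.pi Set.univ (fun _ => Set.Icc (-δ) δ) := by
        ext z
        simp only [hBdef, Set.mem_setOf_eq, Set.mem_pi, Set.mem_univ, true_implies,
          Set.mem_Icc, abs_le]
      rw [hBeq]
      exact isCompact_univ_pi fun _ => isCompact_Icc
    have h0B : (0 : Fin d → ℝ) ∈ B := fun k => by simp [hδ.le]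
    set S : Set (Fin d → ℝ) := K' + B with hSdef
    by_cases hxS : x ∈ S
    · obtain ⟨y, hy, z, hz, hyz⟩ := hxS
      refine ⟨y, hy, z, hyz.symm, ?_⟩
      haveI : Nonempty (Fin d) := ⟨⟨0, hd⟩⟩
      apply ciSup_le
      intro k
      calc (d:ℝ) * |z k| ≤ d * δ := by gcongr; exact hz k
        _ = ε := by rw [hδdef]; field_simp
    · exfalso
      have hSclosed : IsClosed S := hcl.add_right_of_isCompact hBcomp
      have hSconv : Convex ℝ S := hconv.add hBconv
      obtain ⟨f, u, hfxu, hfSu⟩ := geometric_hahn_banach_point_closed hSconv hSclosed hxS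
      set v₀ : Fin d → ℝ := fun i => f (Pi.single i 1) with hv₀
      have hf_eq : ∀ w : Fin d → ℝ, f w = ∑ i, w i * v₀ i := by
        intro w
        have hw : w = ∑ i, w i • (Pi.single i (1:ℝ) : Fin d → ℝ) := by
          funext j
          simp [Pi.single_apply, Finset.sum_apply]
        conv_lhs => rw [hw]
        rw [map_sum]
        simp [hv₀, map_smul, smul_eq_mul]
      have hSne : S.Nonempty := by
        obtain ⟨y, hy⟩ := hne
        exact ⟨y + 0, Set.add_mem_add hy h0B⟩
      have hv₀ne : ∃ i, v₀ i ≠ 0 := by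
        by_contra h
        push_neg at h
        obtain ⟨a, ha⟩ := hSne
        have h1 : f a = 0 := by rw [hf_eq]; simp [h]
        have h2 : f x = 0 := by rw [hf_eq]; simp [h]
        have := hfxu.trans (hfSu a ha)
        rw [h1, h2] at this
        exact lt_irrefl _ this
      set N : ℝ := norm1 d v₀ with hN
      have hNpos : 0 < N := by
        obtain ⟨i, hi⟩ := hv₀ne
        have : 0 < ∑ k, |v₀ k| := by
          apply Finset.sum_pos' (fun k _ => abs_nonneg _)
          exact ⟨i, Finset.mem_univ i, abs_pos.mpr hi⟩
        exact mul_pos (by positivity) this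
      set v : Fin d → ℝ := fun i => N⁻¹ * v₀ i with hv
      have hvnorm : norm1 d v = 1 := by
        simp only [norm1, hv, abs_mul, abs_of_pos (inv_pos.mpr hNpos)]
        rw [← Finset.mul_sum, ← mul_assoc, mul_comm (1/(d:ℝ)), mul_assoc]
        have hNN : (1/(d:ℝ)) * ∑ k, |v₀ k| = N := rfl
        rw [hNN]
        exact inv_mul_cancel₀ hNpos.ne'
      have hsum : ∑ i, |v₀ i| = d * N := by
        rw [hN, norm1]; field_simp
      have hkey : ∀ w ∈ K', u + ε * N ≤ ∑ i, w i * v₀ i := by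
        intro w hw
        set z : Fin d → ℝ := fun k => if 0 ≤ v₀ k then -δ else δ with hz
        have hzB : z ∈ B := by
          intro k
          simp only [hz]
          split_ifs
          · rw [abs_neg, abs_of_pos hδ]
          · rw [abs_of_pos hδ]
        have hfz : f z = -(ε * N) := by
          rw [hf_eq]
          have hterm : ∀ i, z i * v₀ i = -δ * |v₀ i| := by
            intro i
            simp only [hz]
            split_ifs with h
            · rw [abs_of_nonneg h]
            · rw [abs_of_neg (lt_of_not_ge h)]; ring
          simp_rw [hterm]
          rw [← Finset.mul_sum, hsum, hδdef]
          field_simp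
        have hlt := hfSu (w + z) (Set.add_mem_add hw hzB)
        rw [map_add, hfz, hf_eq w] at hlt
        linarith
      have hdot : ∀ w : Fin d → ℝ, ∑ i, w i * v i = N⁻¹ * ∑ i, w i * v₀ i := by
        intro w
        simp only [hv]
        rw [Finset.mul_sum]
        congr 1; funext i; ring
      have hfinal := hx v (u / N + ε) hvnorm ?_
      · rw [hdot, ← hf_eq] at hfinal
        have h1 : u / N ≤ N⁻¹ * f x := by linarith
        rw [div_eq_inv_mul] at h1
        have h2 := (mul_le_mul_iff_right₀ (inv_pos.mpr hNpos)).mp h1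
        linarith
      · intro w hw
        rw [hdot]
        have h1 := hkey w hw
        rw [div_add' _ _ _ hNpos.ne', div_eq_inv_mul]
        apply mul_le_mul_of_nonneg_left _ (inv_pos.mpr hNpos).le
        linarith
end
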